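/- Let n ≥ 1 and let X_1, ..., X_n be i.i.d. samples from a distribution on [0,1] with density π satisfying 0 < π̲ ≤ π ≤ π̄ almost surely. Let Δ_1, ..., Δ_{n+1} be the gaps between consecutive order statistics (with boundary convention X_(0) = 0, X_(n+1) = 1). Then for any γ > 0 with γ < 1/(4π̄), P(min_i Δ_i > γ/n²) ≥ e^{-4π̄γ}. -/

import Mathlib

open MeasureTheory ProbabilityTheory

/-- For `n ≥ 1` i.i.d. samples from a density `π` on `[0,1]` with
`0 < π̲ ≤ π ≤ π̄` a.e., the probability that all gaps between consecutive order
statistics (with boundary conventions `Y 0 = 0`, `Y (n+1) = 1`) exceed `γ/n²`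
is at least `e^{-4π̄γ}`, for any `0 < γ < 1/(4π̄)`. -/
theorem stmt_4 {Ω : Type*} [MeasurableSpace Ω] (P : Measure Ω) [IsProbabilityMeasure P]
    (n : ℕ) (hn : 1 ≤ n)
    (pdf : ℝ → ℝ) (piLow piHigh : ℝ) (hlow : 0 < piLow)
    (hbound : ∀ᵐ x ∂(volume.restrict (Set.Icc (0:ℝ) 1)),
      piLow ≤ pdf x ∧ pdf x ≤ piHigh)
    (X : Fin n → Ω → ℝ) (hX : ∀ i, Measurable (X i))
    (hindep : iIndepFun X P)
    (hlaw : ∀ i, Measure.map (X i) P =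
      (volume.restrict (Set.Icc (0:ℝ) 1)).withDensity (fun x => ENNReal.ofReal (pdf x)))
    (Y : ℕ → Ω → ℝ)
    (hY0 : ∀ ω, Y 0 ω = 0)
    (hYtop : ∀ ω, Y (n + 1) ω = 1)
    (hsort : ∀ ω, ∀ i j, 1 ≤ i → i ≤ j → j ≤ n → Y i ω ≤ Y j ω)
    (hperm : ∀ ω, ∃ σ : Equiv.Perm (Fin n), ∀ i : Fin n, Y (i.1 + 1) ω = X (σ i) ω)
    (γ : ℝ) (hγ0 : 0 < γ) (hγ1 : γ < 1 / (4 * piHigh)) :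
    P {ω | ∀ i, 1 ≤ i → i ≤ n + 1 → Y i ω - Y (i - 1) ω > γ / n ^ 2} ≥
      ENNReal.ofReal (Real.exp (-(4 * piHigh * γ))) := by
  set ν := volume.restrict (Set.Icc (0:ℝ) 1) with hν
  -- piHigh is positive
  have hνne : ν ≠ 0 := by
    rw [hν]
    intro h
    have h1 : volume (Set.Icc (0:ℝ) 1) = 0 := by
      have := congrArg (fun m : Measure ℝ => m (Set.Icc (0:ℝ) 1)) h
      simpa [Measure.restrict_apply_self] using this
    simp [Real.volume_Icc] at h1
  have : (MeasureTheory.ae ν).NeBot := ae_neBot.mpr hνne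
  obtain ⟨x₀, hx₀⟩ := hbound.exists
  have hPH : 0 < piHigh := lt_of_lt_of_le hlow (hx₀.1.trans hx₀.2)
  set t := γ / (n : ℝ) ^ 2 with htdef
  have hnR : (0:ℝ) < (n : ℝ) ^ 2 := by
    have : (0:ℝ) < (n : ℝ) := by exact_mod_cast hn
    positivity
  have ht : 0 < t := div_pos hγ0 hnR
  -- basic bound on the law of each X i
  have hmap : ∀ (i : Fin n) (A : Set ℝ) (a b : ℝ), MeasurableSet A →
      A ∩ Set.Icc 0 1 ⊆ Set.Icc a b →
      (Measure.map (X i) P) A ≤ ENNReal.ofReal (piHigh * (b - a)) := by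
    intro i A a b hA hsub
    rw [hlaw i, withDensity_apply _ hA]
    calc ∫⁻ x in A, ENNReal.ofReal (pdf x) ∂ν
        ≤ ∫⁻ _ in A, ENNReal.ofReal piHigh ∂ν := by
          refine lintegral_mono_ae (ae_restrict_of_ae ?_)
          exact hbound.mono fun x hx => ENNReal.ofReal_le_ofReal hx.2
      _ = ENNReal.ofReal piHigh * ν A := setLIntegral_const A _
      _ = ENNReal.ofReal piHigh * volume (A ∩ Set.Icc 0 1) := by
          rw [hν, Measure.restrict_apply hA]
      _ ≤ ENNReal.ofReal piHigh * volume (Set.Icc a b) := by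
          exact mul_le_mul_right (measure_mono hsub) _
      _ = ENNReal.ofReal (piHigh * (b - a)) := by
          rw [Real.volume_Icc, ← ENNReal.ofReal_mul hPH.le]
  have hmapP : ∀ (i : Fin n) (A : Set ℝ) (a b : ℝ), MeasurableSet A →
      A ∩ Set.Icc 0 1 ⊆ Set.Icc a b →
      P (X i ⁻¹' A) ≤ ENNReal.ofReal (piHigh * (b - a)) := by
    intro i A a b hA hsub
    rw [← Measure.map_apply (hX i) hA]
    exact hmap i A a b hA hsub
  -- diagonal (boundary) events
  have hdiag : ∀ i : Fin n,
      P {ω | X i ω ≤ t ∨ 1 - t ≤ X i ω} ≤ ENNReal.ofReal (2 * piHigh * t) := by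
    intro i
    have h1 : {ω | X i ω ≤ t ∨ 1 - t ≤ X i ω}
        = X i ⁻¹' Set.Iic t ∪ X i ⁻¹' Set.Ici (1 - t) := rfl
    rw [h1]
    calc P (X i ⁻¹' Set.Iic t ∪ X i ⁻¹' Set.Ici (1 - t))
        ≤ P (X i ⁻¹' Set.Iic t) + P (X i ⁻¹' Set.Ici (1 - t)) := measure_union_le _ _
      _ ≤ ENNReal.ofReal (piHigh * (t - 0)) + ENNReal.ofReal (piHigh * (1 - (1 - t))) := by
          gcongr
          · exact hmapP i _ 0 t measurableSet_Iic
              (fun x hx => ⟨hx.2.1, hx.1⟩)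
          · exact hmapP i _ (1 - t) 1 measurableSet_Ici
              (fun x hx => ⟨hx.1, hx.2.2⟩)
      _ = ENNReal.ofReal (2 * piHigh * t) := by
          rw [← ENNReal.ofReal_add (by nlinarith [hPH.le, ht.le]) (by nlinarith [hPH.le, ht.le])]
          ring_nf
  -- off-diagonal (pair) events
  have hpair : ∀ i j : Fin n, i ≠ j →
      P {ω | |X i ω - X j ω| ≤ t} ≤ ENNReal.ofReal (2 * piHigh * t) := by
    intro i j hij
    have hind := hindep.indepFun hij
    have hmapeq := (indepFun_iff_map_prod_eq_prod_map_map (hX i).aemeasurable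
      (hX j).aemeasurable).mp hind
    have hs : MeasurableSet {p : ℝ × ℝ | |p.1 - p.2| ≤ t} :=
      measurableSet_le ((measurable_fst.sub measurable_snd).abs) measurable_const
    have h1 : {ω | |X i ω - X j ω| ≤ t}
        = (fun ω => (X i ω, X j ω)) ⁻¹' {p : ℝ × ℝ | |p.1 - p.2| ≤ t} := rfl
    rw [h1, ← Measure.map_apply ((hX i).prodMk (hX j)) hs, hmapeq,
      Measure.prod_apply hs]
    have h2 : ∀ x : ℝ, (Measure.map (X j) P) (Prod.mk x ⁻¹' {p : ℝ × ℝ | |p.1 - p.2| ≤ t})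
        ≤ ENNReal.ofReal (2 * piHigh * t) := by
      intro x
      have hpre : Prod.mk x ⁻¹' {p : ℝ × ℝ | |p.1 - p.2| ≤ t} = {y : ℝ | |x - y| ≤ t} := rfl
      rw [hpre]
      have hAm : MeasurableSet {y : ℝ | |x - y| ≤ t} :=
        measurableSet_le ((measurable_const.sub measurable_id).abs) measurable_const
      have := hmap j {y : ℝ | |x - y| ≤ t} (x - t) (x + t) hAm (by
        intro y hy
        have h' : |x - y| ≤ t := hy.1
        rcases abs_le.mp h' with ⟨h1', h2'⟩
        constructor <;> [linarith; linarith])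
      refine this.trans (le_of_eq ?_)
      congr 1
      ring
    haveI : IsProbabilityMeasure (Measure.map (X i) P) :=
      Measure.isProbabilityMeasure_map (hX i).aemeasurable
    calc ∫⁻ x, (Measure.map (X j) P) (Prod.mk x ⁻¹' {p : ℝ × ℝ | |p.1 - p.2| ≤ t})
          ∂(Measure.map (X i) P)
        ≤ ∫⁻ _, ENNReal.ofReal (2 * piHigh * t) ∂(Measure.map (X i) P) :=
          lintegral_mono h2
      _ = ENNReal.ofReal (2 * piHigh * t) := by simp
  -- the bad events
  set E : Fin n × Fin n → Set Ω := fun p =>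
    if p.1 = p.2 then {ω | X p.1 ω ≤ t ∨ 1 - t ≤ X p.1 ω}
    else {ω | |X p.1 ω - X p.2 ω| ≤ t} with hE
  have hEbound : ∀ p, P (E p) ≤ ENNReal.ofReal (2 * piHigh * t) := by
    intro p
    by_cases h : p.1 = p.2
    · rw [hE]; simp only [if_pos h]; exact hdiag p.1
    · rw [hE]; simp only [if_neg h]; exact hpair p.1 p.2 h
  have hBad : P (⋃ p, E p) ≤ ENNReal.ofReal (2 * piHigh * γ) := by
    calc P (⋃ p, E p) ≤ ∑' p, P (E p) := measure_iUnion_le E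
      _ = ∑ p : Fin n × Fin n, P (E p) := tsum_fintype _
      _ ≤ (Finset.univ : Finset (Fin n × Fin n)).card • ENNReal.ofReal (2 * piHigh * t) :=
          Finset.sum_le_card_nsmul _ _ _ (fun p _ => hEbound p)
      _ = (n ^ 2) • ENNReal.ofReal (2 * piHigh * t) := by
          simp [Finset.card_univ, sq]
      _ = ENNReal.ofReal ((n ^ 2 : ℕ) * (2 * piHigh * t)) := by
          rw [nsmul_eq_mul, ← ENNReal.ofReal_natCast (n ^ 2),
            ← ENNReal.ofReal_mul (by positivity)]
      _ = ENNReal.ofReal (2 * piHigh * γ) := by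
          congr 1
          rw [htdef]
          push_cast
          field_simp
  -- inclusion of the complement of the bad set into the target set
  have hincl : (⋃ p, E p)ᶜ ⊆
      {ω | ∀ i, 1 ≤ i → i ≤ n + 1 → Y i ω - Y (i - 1) ω > γ / (n : ℝ) ^ 2} := by
    intro ω hω
    simp only [Set.mem_compl_iff, Set.mem_iUnion, not_exists] at hω
    have ha : ∀ i : Fin n, t < X i ω ∧ X i ω < 1 - t := by
      intro i
      have := hω (i, i)
      simp only [hE, if_pos rfl, Set.mem_setOf_eq, not_or, not_le] at this
      exact this
    have hb : ∀ i j : Fin n, i ≠ j → t < |X i ω - X j ω| := by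
      intro i j hij
      have := hω (i, j)
      simp only [hE, if_neg hij, Set.mem_setOf_eq, not_le] at this
      exact this
    obtain ⟨σ, hσ⟩ := hperm ω
    intro i hi1 hi2
    show Y i ω - Y (i - 1) ω > t
    by_cases hitop : i = n + 1
    · subst hitop
      have hYn : Y n ω = X (σ ⟨n - 1, by omega⟩) ω := by
        have := hσ ⟨n - 1, by omega⟩
        rwa [show n - 1 + 1 = n from by omega] at this
      rw [hYtop ω, show n + 1 - 1 = n from by omega, hYn]
      have := (ha (σ ⟨n - 1, by omega⟩)).2
      linarith
    · have hin : i ≤ n := by omega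
      by_cases hi1' : i = 1
      · subst hi1'
        have hY1 : Y 1 ω = X (σ ⟨0, by omega⟩) ω := by
          have := hσ ⟨0, by omega⟩
          simpa using this
        rw [show (1 : ℕ) - 1 = 0 from rfl, hY0 ω, hY1, sub_zero]
        exact (ha (σ ⟨0, by omega⟩)).1
      · have h2i : 2 ≤ i := by omega
        have hYa : Y i ω = X (σ ⟨i - 1, by omega⟩) ω := by
          have := hσ ⟨i - 1, by omega⟩
          rwa [show i - 1 + 1 = i from by omega] at this
        have hYb : Y (i - 1) ω = X (σ ⟨i - 2, by omega⟩) ω := by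
          have := hσ ⟨i - 2, by omega⟩
          rwa [show i - 2 + 1 = i - 1 from by omega] at this
        have hab : (⟨i - 1, by omega⟩ : Fin n) ≠ ⟨i - 2, by omega⟩ := by
          simp only [ne_eq, Fin.mk.injEq]
          omega
        have hne : σ ⟨i - 1, by omega⟩ ≠ σ ⟨i - 2, by omega⟩ :=
          fun h => hab (σ.injective h)
        have hmono : Y (i - 1) ω ≤ Y i ω := hsort ω (i - 1) i (by omega) (by omega) hin
        have habs := hb _ _ hne
        rw [hYa, hYb]
        rw [hYa, hYb] at hmono
        rwa [abs_of_nonneg (sub_nonneg.mpr hmono)] at habs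
  -- conclude
  have hx1 : 4 * piHigh * γ ≤ 1 := by
    have h4 : 0 < 4 * piHigh := by positivity
    rw [lt_div_iff₀ h4] at hγ1
    nlinarith
  have hreal : Real.exp (-(4 * piHigh * γ)) ≤ 1 - 2 * piHigh * γ := by
    set x := 4 * piHigh * γ with hxdef
    have hx0 : 0 < x := by positivity
    have hmul : Real.exp (-x) * Real.exp x = 1 := by
      rw [← Real.exp_add]; simp
    have hexp := Real.add_one_le_exp x
    have hpos := Real.exp_pos (-x)
    have key : Real.exp (-x) ≤ 1 - x / 2 := by
      nlinarith [mul_pos hpos (show (0:ℝ) < 1 + x by linarith)]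
    linarith
  calc ENNReal.ofReal (Real.exp (-(4 * piHigh * γ)))
      ≤ ENNReal.ofReal (1 - 2 * piHigh * γ) := ENNReal.ofReal_le_ofReal hreal
    _ = 1 - ENNReal.ofReal (2 * piHigh * γ) := by
        rw [ENNReal.ofReal_sub 1 (by positivity), ENNReal.ofReal_one]
    _ ≤ 1 - P (⋃ p, E p) := by
        exact tsub_le_tsub_left hBad 1
    _ ≤ P ((⋃ p, E p)ᶜ) := by
        rw [tsub_le_iff_right]
        calc (1 : ENNReal) = P Set.univ := (measure_univ).symm
          _ = P ((⋃ p, E p)ᶜ ∪ (⋃ p, E p)) := by rw [Set.compl_union_self]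
          _ ≤ P ((⋃ p, E p)ᶜ) + P (⋃ p, E p) := measure_union_le _ _
    _ ≤ P {ω | ∀ i, 1 ≤ i → i ≤ n + 1 → Y i ω - Y (i - 1) ω > γ / (n : ℝ) ^ 2} :=
        measure_mono hincl
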